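/- Substitution reduction: If y ∈ C^{1−α}(0,1] solves y(ϑ) = ȳ(ϑ) + (1/Γ(α)) ∫₀^ϑ [c(ζ)y(ζ)+d(ζ)](ϑ−ζ)^(α−1) dζ on (0,1], then the function s defined by s(0) = 0 and s(ϑ) = ϑ^(1−α)(y(ϑ) − ȳ(ϑ)) for ϑ ∈ (0,1] extends to a continuous function on [0,1] and satisfies s(ϑ) = s̄(ϑ) + (ϑ^(1−α)/Γ(α)) ∫₀^ϑ c(ζ) s(ζ) ζ^(α−1)(ϑ−ζ)^(α−1) dζ for all ϑ ∈ [0,1], where s̄(ϑ) = (ϑ^(1−α)/Γ(α)) ∫₀^ϑ [c(ζ)ȳ(ζ)+d(ζ)](ϑ−ζ)^(α−1) dζ (with s̄(0)=0). -/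

import Mathlib

open MeasureTheory Real Set Filter


lemma kcontOn {α ϑ : ℝ} {s : Set ℝ} (h : ∀ ζ ∈ s, 0 < ζ ∧ ζ < ϑ) :
    ContinuousOn (fun ζ : ℝ => ζ ^ (α-1) * (ϑ - ζ) ^ (α-1)) s :=
  (continuousOn_id.rpow_const fun ζ hζ => Or.inl (h ζ hζ).1.ne').mul
    ((continuousOn_const.sub continuousOn_id).rpow_const fun ζ hζ =>
      Or.inl (sub_ne_zero.mpr (h ζ hζ).2.ne'))

lemma kernel_int {α : ℝ} (hα0 : 0 < α) (hα1 : α < 1) {ϑ : ℝ} (hϑ : 0 < ϑ) :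
    IntegrableOn (fun ζ : ℝ => ζ ^ (α-1) * (ϑ - ζ) ^ (α-1)) (Set.Ioo 0 ϑ) := by
  have hexp : (-1:ℝ) < α - 1 := by linarith
  have hhalf : (0:ℝ) < ϑ/2 := by linarith
  have h1' : IntegrableOn (fun ζ : ℝ => ζ ^ (α-1)) (Set.Ioc 0 (ϑ/2)) := by
    have := intervalIntegral.intervalIntegrable_rpow' (a := 0) (b := ϑ/2) hexp
    rwa [intervalIntegrable_iff_integrableOn_Ioc_of_le hhalf.le] at this
  have h2' : IntegrableOn (fun ζ : ℝ => (ϑ - ζ) ^ (α-1)) (Set.Ioo (ϑ/2) ϑ) := by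
    have h := (intervalIntegral.intervalIntegrable_rpow' (a := 0) (b := ϑ/2) hexp).comp_sub_left ϑ
    simp only [sub_zero] at h
    have h' := h.symm
    rw [intervalIntegrable_iff_integrableOn_Ioc_of_le (by linarith)] at h'
    rw [sub_half] at h'
    exact (integrableOn_Ioc_iff_integrableOn_Ioo).mp h'
  have hA : IntegrableOn (fun ζ : ℝ => ζ ^ (α-1) * (ϑ - ζ) ^ (α-1)) (Set.Ioc 0 (ϑ/2)) := by
    refine ((h1'.const_mul ((ϑ/2) ^ (α-1))).mono'
      ((kcontOn fun ζ hζ => ⟨hζ.1, by linarith [hζ.2]⟩).aestronglyMeasurable measurableSet_Ioc) ?_)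
    filter_upwards [ae_restrict_mem measurableSet_Ioc] with ζ hζ
    have hζ0 : (0:ℝ) < ζ := hζ.1
    have h1 : (ϑ - ζ) ^ (α-1) ≤ (ϑ/2) ^ (α-1) :=
      Real.rpow_le_rpow_of_nonpos hhalf (by linarith [hζ.2]) (by linarith)
    have : ‖ζ ^ (α-1) * (ϑ - ζ) ^ (α-1)‖ = ζ ^ (α-1) * (ϑ - ζ) ^ (α-1) := by
      rw [Real.norm_eq_abs, abs_of_nonneg]
      exact mul_nonneg (Real.rpow_nonneg hζ0.le _) (Real.rpow_nonneg (by linarith [hζ.2]) _)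
    rw [this, mul_comm ((ϑ/2) ^ (α-1))]
    exact mul_le_mul_of_nonneg_left h1 (Real.rpow_nonneg hζ0.le _)
  have hB : IntegrableOn (fun ζ : ℝ => ζ ^ (α-1) * (ϑ - ζ) ^ (α-1)) (Set.Ioo (ϑ/2) ϑ) := by
    refine ((h2'.const_mul ((ϑ/2) ^ (α-1))).mono'
      ((kcontOn fun ζ hζ => ⟨lt_trans hhalf hζ.1, hζ.2⟩).aestronglyMeasurable measurableSet_Ioo) ?_)
    filter_upwards [ae_restrict_mem measurableSet_Ioo] with ζ hζ
    have hζ0 : (0:ℝ) < ζ := lt_trans hhalf hζ.1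
    have h1 : ζ ^ (α-1) ≤ (ϑ/2) ^ (α-1) :=
      Real.rpow_le_rpow_of_nonpos hhalf hζ.1.le (by linarith)
    have : ‖ζ ^ (α-1) * (ϑ - ζ) ^ (α-1)‖ = ζ ^ (α-1) * (ϑ - ζ) ^ (α-1) := by
      rw [Real.norm_eq_abs, abs_of_nonneg]
      exact mul_nonneg (Real.rpow_nonneg hζ0.le _) (Real.rpow_nonneg (by linarith [hζ.2]) _)
    rw [this]
    exact mul_le_mul_of_nonneg_right h1 (Real.rpow_nonneg (by linarith [hζ.2]) _)
  have hset : Set.Ioo 0 ϑ ⊆ Set.Ioc 0 (ϑ/2) ∪ Set.Ioo (ϑ/2) ϑ := by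
    intro x hx
    rcases le_or_gt x (ϑ/2) with h | h
    · exact Or.inl ⟨hx.1, h⟩
    · exact Or.inr ⟨h, hx.2⟩
  exact (hA.union hB).mono_set hset

lemma kernel_integral_le {α : ℝ} (hα0 : 0 < α) (hα1 : α < 1) {ϑ : ℝ} (hϑ : 0 < ϑ) :
    ∫ ζ in Set.Ioo 0 ϑ, ζ ^ (α-1) * (ϑ - ζ) ^ (α-1) ≤ 2/α * (ϑ/2) ^ (2*α-1) := by
  have hexp : (-1:ℝ) < α - 1 := by linarith
  have hhalf : (0:ℝ) < ϑ/2 := by linarith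
  have hsub1 : Set.Ioc 0 (ϑ/2) ⊆ Set.Ioo 0 ϑ := fun x hx => ⟨hx.1, by linarith [hx.2]⟩
  have hsub2 : Set.Ioo (ϑ/2) ϑ ⊆ Set.Ioo 0 ϑ := fun x hx => ⟨lt_trans hhalf hx.1, hx.2⟩
  have hk := kernel_int hα0 hα1 hϑ
  have hI1 := hk.mono_set hsub1
  have hI2 := hk.mono_set hsub2
  -- integrability of the dominating functions
  have h1' : IntegrableOn (fun ζ : ℝ => (ϑ/2) ^ (α-1) * ζ ^ (α-1)) (Set.Ioc 0 (ϑ/2)) := by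
    have := intervalIntegral.intervalIntegrable_rpow' (a := 0) (b := ϑ/2) hexp
    rw [intervalIntegrable_iff_integrableOn_Ioc_of_le hhalf.le] at this
    exact this.const_mul _
  have h2' : IntegrableOn (fun ζ : ℝ => (ϑ/2) ^ (α-1) * (ϑ - ζ) ^ (α-1)) (Set.Ioo (ϑ/2) ϑ) := by
    have h := (intervalIntegral.intervalIntegrable_rpow' (a := 0) (b := ϑ/2) hexp).comp_sub_left ϑ
    simp only [sub_zero] at h
    have h' := h.symm
    rw [intervalIntegrable_iff_integrableOn_Ioc_of_le (by linarith)] at h'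
    rw [sub_half] at h'
    exact ((integrableOn_Ioc_iff_integrableOn_Ioo).mp h').const_mul _
  -- split
  have hset : Set.Ioo 0 ϑ = Set.Ioc 0 (ϑ/2) ∪ Set.Ioo (ϑ/2) ϑ := by
    ext x
    constructor
    · rintro ⟨h1, h2⟩
      rcases le_or_gt x (ϑ/2) with h | h
      · exact Or.inl ⟨h1, h⟩
      · exact Or.inr ⟨h, h2⟩
    · rintro (⟨h1, h2⟩ | ⟨h1, h2⟩)
      · exact ⟨h1, by linarith⟩
      · exact ⟨by linarith, h2⟩
  have hdisj : Disjoint (Set.Ioc 0 (ϑ/2)) (Set.Ioo (ϑ/2) ϑ) := by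
    rw [Set.disjoint_left]
    rintro a ⟨_, h2⟩ ⟨h3, _⟩
    linarith
  have hsplit : ∫ ζ in Set.Ioo 0 ϑ, ζ ^ (α-1) * (ϑ - ζ) ^ (α-1)
      = (∫ ζ in Set.Ioc 0 (ϑ/2), ζ ^ (α-1) * (ϑ - ζ) ^ (α-1))
        + ∫ ζ in Set.Ioo (ϑ/2) ϑ, ζ ^ (α-1) * (ϑ - ζ) ^ (α-1) := by
    rw [hset]
    exact setIntegral_union hdisj measurableSet_Ioo hI1 hI2
  -- value of the model integral
  have hval : ∫ ζ in (0:ℝ)..(ϑ/2), ζ ^ (α-1) = (ϑ/2) ^ α / α := by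
    rw [integral_rpow (Or.inl hexp)]
    rw [sub_add_cancel, Real.zero_rpow hα0.ne', sub_zero]
  have hb1 : (∫ ζ in Set.Ioc 0 (ϑ/2), ζ ^ (α-1) * (ϑ - ζ) ^ (α-1))
      ≤ (ϑ/2) ^ (α-1) * ((ϑ/2) ^ α / α) := by
    have hmono : (∫ ζ in Set.Ioc 0 (ϑ/2), ζ ^ (α-1) * (ϑ - ζ) ^ (α-1))
        ≤ ∫ ζ in Set.Ioc 0 (ϑ/2), (ϑ/2) ^ (α-1) * ζ ^ (α-1) := by
      refine setIntegral_mono_on hI1 h1' measurableSet_Ioc ?_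
      intro ζ hζ
      have h1 : (ϑ - ζ) ^ (α-1) ≤ (ϑ/2) ^ (α-1) :=
        Real.rpow_le_rpow_of_nonpos hhalf (by linarith [hζ.2]) (by linarith)
      rw [mul_comm ((ϑ/2) ^ (α-1))]
      exact mul_le_mul_of_nonneg_left h1 (Real.rpow_nonneg hζ.1.le _)
    refine hmono.trans_eq ?_
    rw [integral_const_mul, ← intervalIntegral.integral_of_le hhalf.le, hval]
  have hb2 : (∫ ζ in Set.Ioo (ϑ/2) ϑ, ζ ^ (α-1) * (ϑ - ζ) ^ (α-1))
      ≤ (ϑ/2) ^ (α-1) * ((ϑ/2) ^ α / α) := by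
    have hmono : (∫ ζ in Set.Ioo (ϑ/2) ϑ, ζ ^ (α-1) * (ϑ - ζ) ^ (α-1))
        ≤ ∫ ζ in Set.Ioo (ϑ/2) ϑ, (ϑ/2) ^ (α-1) * (ϑ - ζ) ^ (α-1) := by
      refine setIntegral_mono_on hI2 h2' measurableSet_Ioo ?_
      intro ζ hζ
      have h1 : ζ ^ (α-1) ≤ (ϑ/2) ^ (α-1) :=
        Real.rpow_le_rpow_of_nonpos hhalf hζ.1.le (by linarith)
      exact mul_le_mul_of_nonneg_right h1 (Real.rpow_nonneg (by linarith [hζ.2]) _)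
    refine hmono.trans_eq ?_
    rw [integral_const_mul, ← integral_Ioc_eq_integral_Ioo,
      ← intervalIntegral.integral_of_le (by linarith : ϑ/2 ≤ ϑ)]
    have : (∫ ζ in (ϑ/2)..ϑ, (ϑ - ζ) ^ (α-1)) = ∫ x in (ϑ - ϑ)..(ϑ - ϑ/2), x ^ (α-1) :=
      intervalIntegral.integral_comp_sub_left (fun x => x ^ (α-1)) ϑ
    rw [this, sub_self, sub_half, hval]
  have hcomb : (ϑ/2) ^ (α-1) * ((ϑ/2) ^ α / α) = 1/α * (ϑ/2) ^ (2*α-1) := by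
    calc (ϑ/2) ^ (α-1) * ((ϑ/2) ^ α / α) = ((ϑ/2) ^ (α-1) * (ϑ/2) ^ α)/α := by ring
      _ = (ϑ/2) ^ (2*α-1)/α := by rw [← Real.rpow_add hhalf, show α-1+α = 2*α-1 by ring]
      _ = 1/α * (ϑ/2) ^ (2*α-1) := by ring
  rw [hsplit]
  rw [hcomb] at hb1 hb2
  have : 1/α * (ϑ/2) ^ (2*α-1) + 1/α * (ϑ/2) ^ (2*α-1) = 2/α * (ϑ/2) ^ (2*α-1) := by ring
  linarith

theorem stmt_10 (α : ℝ) (hα : α ∈ Set.Ioo (0:ℝ) 1)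
    (ybar : ℝ → ℝ) (hybar_cont : ContinuousOn ybar (Set.Ioc 0 1))
    (hybar_bdd : ∃ K, ∀ ζ ∈ Set.Ioc (0:ℝ) 1, |ζ ^ (1 - α) * ybar ζ| ≤ K)
    (c d : ℝ → ℝ) (hc : ContinuousOn c (Set.Icc 0 1)) (hd : ContinuousOn d (Set.Icc 0 1))
    (y : ℝ → ℝ) (hy_cont : ContinuousOn y (Set.Ioc 0 1))
    (hy_bdd : ∃ K, ∀ ζ ∈ Set.Ioc (0:ℝ) 1, |ζ ^ (1 - α) * y ζ| ≤ K)
    (hy_eq : ∀ ϑ ∈ Set.Ioc (0:ℝ) 1,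
      y ϑ = ybar ϑ + (1 / Real.Gamma α) *
        ∫ ζ in (0:ℝ)..ϑ, (c ζ * y ζ + d ζ) * (ϑ - ζ) ^ (α - 1))
    (s sbar : ℝ → ℝ)
    (hs : ∀ ϑ : ℝ, s ϑ = if ϑ = 0 then 0 else ϑ ^ (1 - α) * (y ϑ - ybar ϑ))
    (hsbar : ∀ ϑ : ℝ, sbar ϑ = if ϑ = 0 then 0 else
      (ϑ ^ (1 - α) / Real.Gamma α) * ∫ ζ in (0:ℝ)..ϑ, (c ζ * ybar ζ + d ζ) * (ϑ - ζ) ^ (α - 1)) :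
    ContinuousOn s (Set.Icc 0 1) ∧
      ∀ ϑ ∈ Set.Icc (0:ℝ) 1,
        s ϑ = sbar ϑ + (ϑ ^ (1 - α) / Real.Gamma α) *
          ∫ ζ in (0:ℝ)..ϑ, c ζ * s ζ * ζ ^ (α - 1) * (ϑ - ζ) ^ (α - 1) := by
  obtain ⟨hα0, hα1⟩ := hα
  have hexp : (-1:ℝ) < α - 1 := by linarith
  have hΓ : 0 < Real.Gamma α := Real.Gamma_pos_of_pos hα0
  obtain ⟨Ky, hKy⟩ := hy_bdd
  obtain ⟨Kb, hKb⟩ := hybar_bdd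
  obtain ⟨Kc, hKc⟩ := (isCompact_Icc (a := (0:ℝ)) (b := 1)).exists_bound_of_continuousOn hc
  obtain ⟨Kd, hKd⟩ := (isCompact_Icc (a := (0:ℝ)) (b := 1)).exists_bound_of_continuousOn hd
  have hKy0 : 0 ≤ Ky := le_trans (abs_nonneg _) (hKy 1 ⟨one_pos, le_refl 1⟩)
  have hKb0 : 0 ≤ Kb := le_trans (abs_nonneg _) (hKb 1 ⟨one_pos, le_refl 1⟩)
  have hKc0 : 0 ≤ Kc := le_trans (norm_nonneg _) (hKc 0 ⟨le_refl 0, zero_le_one⟩)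
  have hKd0 : 0 ≤ Kd := le_trans (norm_nonneg _) (hKd 0 ⟨le_refl 0, zero_le_one⟩)
  -- pointwise bounds
  have habs : ∀ (f : ℝ → ℝ) (K : ℝ), (∀ ζ ∈ Set.Ioc (0:ℝ) 1, |ζ ^ (1-α) * f ζ| ≤ K) →
      ∀ ζ ∈ Set.Ioc (0:ℝ) 1, |f ζ| ≤ K * ζ ^ (α-1) := by
    intro f K hK ζ hζ
    have h1 : ζ ^ (α-1) * ζ ^ (1-α) = 1 := by
      rw [← Real.rpow_add hζ.1, show α-1+(1-α) = 0 by ring, Real.rpow_zero]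
    have h2 : |ζ ^ (1-α) * f ζ| = ζ ^ (1-α) * |f ζ| := by
      rw [abs_mul, abs_of_nonneg (Real.rpow_nonneg hζ.1.le _)]
    have h3 : ζ ^ (1-α) * |f ζ| ≤ K := h2 ▸ hK ζ hζ
    have h4 := mul_le_mul_of_nonneg_left h3 (Real.rpow_nonneg hζ.1.le (α-1))
    calc |f ζ| = (ζ ^ (α-1) * ζ ^ (1-α)) * |f ζ| := by rw [h1, one_mul]
      _ = ζ ^ (α-1) * (ζ ^ (1-α) * |f ζ|) := by ring
      _ ≤ ζ ^ (α-1) * K := h4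
      _ = K * ζ ^ (α-1) := by ring
  have hyb := habs y Ky hKy
  have hybb := habs ybar Kb hKb
  have hsb : ∀ ζ ∈ Set.Ioc (0:ℝ) 1, |s ζ| ≤ Ky + Kb := by
    intro ζ hζ
    rw [hs ζ, if_neg hζ.1.ne', mul_sub]
    calc |ζ ^ (1-α) * y ζ - ζ ^ (1-α) * ybar ζ|
        ≤ |ζ ^ (1-α) * y ζ| + |ζ ^ (1-α) * ybar ζ| := abs_sub _ _
      _ ≤ Ky + Kb := add_le_add (hKy ζ hζ) (hKb ζ hζ)
  have hone : ∀ ζ : ℝ, ζ ∈ Set.Ioc (0:ℝ) 1 → 1 ≤ ζ ^ (α-1) := fun ζ hζ =>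
    Real.one_le_rpow_of_pos_of_le_one_of_nonpos hζ.1 hζ.2 (by linarith)
  have hsz1 : ∀ ζ : ℝ, 0 < ζ → s ζ * ζ ^ (α-1) = y ζ - ybar ζ := by
    intro ζ h
    have h1 : ζ ^ (α-1) * ζ ^ (1-α) = 1 := by
      rw [← Real.rpow_add h, show α-1+(1-α) = 0 by ring, Real.rpow_zero]
    rw [hs ζ, if_neg h.ne']
    calc (ζ ^ (1-α) * (y ζ - ybar ζ)) * ζ ^ (α-1)
        = (ζ ^ (α-1) * ζ ^ (1-α)) * (y ζ - ybar ζ) := by ring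
      _ = y ζ - ybar ζ := by rw [h1, one_mul]
  -- the central per-ϑ facts
  have main : ∀ ϑ ∈ Set.Ioc (0:ℝ) 1,
      ((∫ ζ in (0:ℝ)..ϑ, (c ζ * y ζ + d ζ) * (ϑ - ζ) ^ (α - 1)) =
        (∫ ζ in (0:ℝ)..ϑ, c ζ * s ζ * ζ ^ (α - 1) * (ϑ - ζ) ^ (α - 1)) +
          ∫ ζ in (0:ℝ)..ϑ, (c ζ * ybar ζ + d ζ) * (ϑ - ζ) ^ (α - 1)) ∧
      |∫ ζ in (0:ℝ)..ϑ, (c ζ * y ζ + d ζ) * (ϑ - ζ) ^ (α - 1)| ≤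
        (Kc * Ky + Kd) * (2/α * (ϑ/2) ^ (2*α-1)) := by
    intro ϑ hϑ
    have hϑ0 : (0:ℝ) < ϑ := hϑ.1
    have hsubIoc : Set.Ioo 0 ϑ ⊆ Set.Ioc (0:ℝ) 1 := fun ζ h => ⟨h.1, le_trans h.2.le hϑ.2⟩
    have hsubIcc : Set.Ioo 0 ϑ ⊆ Set.Icc (0:ℝ) 1 := fun ζ h => ⟨h.1.le, le_trans h.2.le hϑ.2⟩
    have hk := kernel_int hα0 hα1 hϑ0
    -- continuity on Ioo 0 ϑ
    have hcy : ContinuousOn y (Set.Ioo 0 ϑ) := hy_cont.mono hsubIoc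
    have hcyb : ContinuousOn ybar (Set.Ioo 0 ϑ) := hybar_cont.mono hsubIoc
    have hcc : ContinuousOn c (Set.Ioo 0 ϑ) := hc.mono hsubIcc
    have hcd : ContinuousOn d (Set.Ioo 0 ϑ) := hd.mono hsubIcc
    have hc1 : ContinuousOn (fun ζ : ℝ => ζ ^ (α-1)) (Set.Ioo 0 ϑ) :=
      continuousOn_id.rpow_const fun ζ hζ => Or.inl hζ.1.ne'
    have hc2 : ContinuousOn (fun ζ : ℝ => (ϑ - ζ) ^ (α-1)) (Set.Ioo 0 ϑ) :=
      (continuousOn_const.sub continuousOn_id).rpow_const fun ζ hζ =>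
        Or.inl (sub_ne_zero.mpr hζ.2.ne')
    have hcs : ContinuousOn s (Set.Ioo 0 ϑ) := by
      apply ContinuousOn.congr
        ((continuousOn_id.rpow_const fun z _ => Or.inr (by linarith : (0:ℝ) ≤ 1-α)).mul
          (hcy.sub hcyb))
      intro ζ hζ
      rw [hs ζ, if_neg hζ.1.ne']
      rfl
    -- bounds and integrability of the three integrands
    have hAbd : ∀ ζ ∈ Set.Ioo 0 ϑ, ‖(c ζ * y ζ + d ζ) * (ϑ - ζ) ^ (α-1)‖ ≤
        (Kc * Ky + Kd) * (ζ ^ (α-1) * (ϑ - ζ) ^ (α-1)) := by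
      intro ζ hζ
      have hζm := hsubIoc hζ
      have hcb : |c ζ| ≤ Kc := by have := hKc ζ (hsubIcc hζ); rwa [Real.norm_eq_abs] at this
      have hdb : |d ζ| ≤ Kd := by have := hKd ζ (hsubIcc hζ); rwa [Real.norm_eq_abs] at this
      have t1 : |c ζ| * |y ζ| ≤ Kc * (Ky * ζ ^ (α-1)) :=
        mul_le_mul hcb (hyb ζ hζm) (abs_nonneg _) hKc0
      have t2 : |d ζ| ≤ Kd * ζ ^ (α-1) :=
        le_trans hdb (le_mul_of_one_le_right hKd0 (hone ζ hζm))
      have h2 : |c ζ * y ζ + d ζ| ≤ (Kc * Ky + Kd) * ζ ^ (α-1) := by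
        calc |c ζ * y ζ + d ζ| ≤ |c ζ| * |y ζ| + |d ζ| := by
              rw [← abs_mul]; exact abs_add_le _ _
          _ ≤ Kc * (Ky * ζ ^ (α-1)) + Kd * ζ ^ (α-1) := add_le_add t1 t2
          _ = (Kc * Ky + Kd) * ζ ^ (α-1) := by ring
      calc ‖(c ζ * y ζ + d ζ) * (ϑ - ζ) ^ (α-1)‖
          = |c ζ * y ζ + d ζ| * (ϑ - ζ) ^ (α-1) := by
            rw [Real.norm_eq_abs, abs_mul,
              abs_of_nonneg (Real.rpow_nonneg (by linarith [hζ.2] : (0:ℝ) ≤ ϑ - ζ) _)]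
        _ ≤ ((Kc * Ky + Kd) * ζ ^ (α-1)) * (ϑ - ζ) ^ (α-1) :=
            mul_le_mul_of_nonneg_right h2 (Real.rpow_nonneg (by linarith [hζ.2]) _)
        _ = (Kc * Ky + Kd) * (ζ ^ (α-1) * (ϑ - ζ) ^ (α-1)) := mul_assoc _ _ _
    have hDbd : ∀ ζ ∈ Set.Ioo 0 ϑ, ‖(c ζ * ybar ζ + d ζ) * (ϑ - ζ) ^ (α-1)‖ ≤
        (Kc * Kb + Kd) * (ζ ^ (α-1) * (ϑ - ζ) ^ (α-1)) := by
      intro ζ hζ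
      have hζm := hsubIoc hζ
      have hcb : |c ζ| ≤ Kc := by have := hKc ζ (hsubIcc hζ); rwa [Real.norm_eq_abs] at this
      have hdb : |d ζ| ≤ Kd := by have := hKd ζ (hsubIcc hζ); rwa [Real.norm_eq_abs] at this
      have t1 : |c ζ| * |ybar ζ| ≤ Kc * (Kb * ζ ^ (α-1)) :=
        mul_le_mul hcb (hybb ζ hζm) (abs_nonneg _) hKc0
      have t2 : |d ζ| ≤ Kd * ζ ^ (α-1) :=
        le_trans hdb (le_mul_of_one_le_right hKd0 (hone ζ hζm))
      have h2 : |c ζ * ybar ζ + d ζ| ≤ (Kc * Kb + Kd) * ζ ^ (α-1) := by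
        calc |c ζ * ybar ζ + d ζ| ≤ |c ζ| * |ybar ζ| + |d ζ| := by
              rw [← abs_mul]; exact abs_add_le _ _
          _ ≤ Kc * (Kb * ζ ^ (α-1)) + Kd * ζ ^ (α-1) := add_le_add t1 t2
          _ = (Kc * Kb + Kd) * ζ ^ (α-1) := by ring
      calc ‖(c ζ * ybar ζ + d ζ) * (ϑ - ζ) ^ (α-1)‖
          = |c ζ * ybar ζ + d ζ| * (ϑ - ζ) ^ (α-1) := by
            rw [Real.norm_eq_abs, abs_mul,
              abs_of_nonneg (Real.rpow_nonneg (by linarith [hζ.2] : (0:ℝ) ≤ ϑ - ζ) _)]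
        _ ≤ ((Kc * Kb + Kd) * ζ ^ (α-1)) * (ϑ - ζ) ^ (α-1) :=
            mul_le_mul_of_nonneg_right h2 (Real.rpow_nonneg (by linarith [hζ.2]) _)
        _ = (Kc * Kb + Kd) * (ζ ^ (α-1) * (ϑ - ζ) ^ (α-1)) := mul_assoc _ _ _
    have hBbd : ∀ ζ ∈ Set.Ioo 0 ϑ, ‖c ζ * s ζ * ζ ^ (α-1) * (ϑ - ζ) ^ (α-1)‖ ≤
        (Kc * (Ky + Kb)) * (ζ ^ (α-1) * (ϑ - ζ) ^ (α-1)) := by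
      intro ζ hζ
      have hζm := hsubIoc hζ
      have hcb : |c ζ| ≤ Kc := by have := hKc ζ (hsubIcc hζ); rwa [Real.norm_eq_abs] at this
      have t1 : |c ζ| * |s ζ| ≤ Kc * (Ky + Kb) :=
        mul_le_mul hcb (hsb ζ hζm) (abs_nonneg _) hKc0
      calc ‖c ζ * s ζ * ζ ^ (α-1) * (ϑ - ζ) ^ (α-1)‖
          = (|c ζ| * |s ζ|) * (ζ ^ (α-1) * (ϑ - ζ) ^ (α-1)) := by
            rw [Real.norm_eq_abs, abs_mul, abs_mul, abs_mul,
              abs_of_nonneg (Real.rpow_nonneg hζ.1.le (α-1)),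
              abs_of_nonneg (Real.rpow_nonneg (by linarith [hζ.2] : (0:ℝ) ≤ ϑ - ζ) (α-1))]
            ring
        _ ≤ (Kc * (Ky + Kb)) * (ζ ^ (α-1) * (ϑ - ζ) ^ (α-1)) :=
            mul_le_mul_of_nonneg_right t1
              (mul_nonneg (Real.rpow_nonneg hζ.1.le _)
                (Real.rpow_nonneg (by linarith [hζ.2]) _))
    have hAmeas : AEStronglyMeasurable (fun ζ => (c ζ * y ζ + d ζ) * (ϑ - ζ) ^ (α-1))
        (volume.restrict (Set.Ioo 0 ϑ)) :=
      (((hcc.mul hcy).add hcd).mul hc2).aestronglyMeasurable measurableSet_Ioo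
    have hDmeas : AEStronglyMeasurable (fun ζ => (c ζ * ybar ζ + d ζ) * (ϑ - ζ) ^ (α-1))
        (volume.restrict (Set.Ioo 0 ϑ)) :=
      (((hcc.mul hcyb).add hcd).mul hc2).aestronglyMeasurable measurableSet_Ioo
    have hBmeas : AEStronglyMeasurable (fun ζ => c ζ * s ζ * ζ ^ (α-1) * (ϑ - ζ) ^ (α-1))
        (volume.restrict (Set.Ioo 0 ϑ)) :=
      (((hcc.mul hcs).mul hc1).mul hc2).aestronglyMeasurable measurableSet_Ioo
    have hAint : IntegrableOn (fun ζ => (c ζ * y ζ + d ζ) * (ϑ - ζ) ^ (α-1)) (Set.Ioo 0 ϑ) :=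
      (hk.const_mul _).mono' hAmeas
        (by filter_upwards [ae_restrict_mem measurableSet_Ioo] with ζ hζ using hAbd ζ hζ)
    have hDint : IntegrableOn (fun ζ => (c ζ * ybar ζ + d ζ) * (ϑ - ζ) ^ (α-1)) (Set.Ioo 0 ϑ) :=
      (hk.const_mul _).mono' hDmeas
        (by filter_upwards [ae_restrict_mem measurableSet_Ioo] with ζ hζ using hDbd ζ hζ)
    have hBint : IntegrableOn (fun ζ => c ζ * s ζ * ζ ^ (α-1) * (ϑ - ζ) ^ (α-1)) (Set.Ioo 0 ϑ) :=
      (hk.const_mul _).mono' hBmeas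
        (by filter_upwards [ae_restrict_mem measurableSet_Ioo] with ζ hζ using hBbd ζ hζ)
    constructor
    · -- integral splitting
      rw [intervalIntegral.integral_of_le hϑ0.le, intervalIntegral.integral_of_le hϑ0.le,
        intervalIntegral.integral_of_le hϑ0.le, integral_Ioc_eq_integral_Ioo,
        integral_Ioc_eq_integral_Ioo, integral_Ioc_eq_integral_Ioo]
      have hpt : Set.EqOn (fun ζ => (c ζ * y ζ + d ζ) * (ϑ - ζ) ^ (α - 1))
          (fun ζ => c ζ * s ζ * ζ ^ (α - 1) * (ϑ - ζ) ^ (α - 1) +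
            (c ζ * ybar ζ + d ζ) * (ϑ - ζ) ^ (α - 1)) (Set.Ioo 0 ϑ) := by
        intro ζ hζ
        have h1 := hsz1 ζ hζ.1
        simp only
        calc (c ζ * y ζ + d ζ) * (ϑ - ζ) ^ (α - 1)
            = (c ζ * ((y ζ - ybar ζ) + ybar ζ) + d ζ) * (ϑ - ζ) ^ (α - 1) := by ring
          _ = (c ζ * (s ζ * ζ ^ (α-1) + ybar ζ) + d ζ) * (ϑ - ζ) ^ (α - 1) := by rw [h1]
          _ = c ζ * s ζ * ζ ^ (α - 1) * (ϑ - ζ) ^ (α - 1) +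
              (c ζ * ybar ζ + d ζ) * (ϑ - ζ) ^ (α - 1) := by ring
      rw [setIntegral_congr_fun measurableSet_Ioo hpt]
      exact integral_add hBint hDint
    · -- bound
      rw [intervalIntegral.integral_of_le hϑ0.le, integral_Ioc_eq_integral_Ioo]
      have h1 : |∫ ζ in Set.Ioo 0 ϑ, (c ζ * y ζ + d ζ) * (ϑ - ζ) ^ (α - 1)| ≤
          ∫ ζ in Set.Ioo 0 ϑ, (Kc * Ky + Kd) * (ζ ^ (α-1) * (ϑ - ζ) ^ (α-1)) := by
        rw [← Real.norm_eq_abs]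
        refine norm_integral_le_of_norm_le (hk.const_mul _) ?_
        filter_upwards [ae_restrict_mem measurableSet_Ioo] with ζ hζ using hAbd ζ hζ
      refine h1.trans ?_
      rw [integral_const_mul]
      exact mul_le_mul_of_nonneg_left (kernel_integral_le hα0 hα1 hϑ0)
        (add_nonneg (mul_nonneg hKc0 hKy0) hKd0)
  -- bound on s near 0
  set C : ℝ := (Kc * Ky + Kd) * (2/α) * (2:ℝ) ^ ((1:ℝ) - 2*α) / Real.Gamma α with hC
  have hC0 : 0 ≤ C := by
    apply div_nonneg _ hΓ.le
    apply mul_nonneg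
    apply mul_nonneg (add_nonneg (mul_nonneg hKc0 hKy0) hKd0)
    · positivity
    · positivity
  have hCs : ∀ ϑ ∈ Set.Ioc (0:ℝ) 1, |s ϑ| ≤ C * ϑ ^ α := by
    intro ϑ hϑ
    have hϑ0 : (0:ℝ) < ϑ := hϑ.1
    obtain ⟨-, hAb⟩ := main ϑ hϑ
    have h1 : s ϑ = ϑ ^ (1-α) * ((1 / Real.Gamma α) *
        ∫ ζ in (0:ℝ)..ϑ, (c ζ * y ζ + d ζ) * (ϑ - ζ) ^ (α - 1)) := by
      rw [hs ϑ, if_neg hϑ0.ne', hy_eq ϑ hϑ]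
      ring
    have h2 : |s ϑ| ≤ ϑ ^ (1-α) * ((1 / Real.Gamma α) *
        ((Kc * Ky + Kd) * (2/α * (ϑ/2) ^ (2*α-1)))) := by
      rw [h1, abs_mul, abs_mul,
        abs_of_nonneg (Real.rpow_nonneg hϑ0.le _),
        abs_of_nonneg (by positivity : (0:ℝ) ≤ 1 / Real.Gamma α)]
      exact mul_le_mul_of_nonneg_left (mul_le_mul_of_nonneg_left hAb (by positivity))
        (Real.rpow_nonneg hϑ0.le _)
    refine h2.trans_eq ?_
    have h3 : ϑ ^ (1-α) * (ϑ/2) ^ (2*α-1) = (2:ℝ) ^ ((1:ℝ) - 2*α) * ϑ ^ α := by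
      rw [Real.div_rpow hϑ0.le (by norm_num : (0:ℝ) ≤ 2)]
      rw [div_eq_mul_inv, ← mul_assoc, ← Real.rpow_add hϑ0,
        show (1-α)+(2*α-1) = α by ring, ← Real.rpow_neg (by norm_num : (0:ℝ) ≤ 2),
        show -(2*α-1) = (1:ℝ)-2*α by ring]
      ring
    calc ϑ ^ (1-α) * ((1 / Real.Gamma α) * ((Kc * Ky + Kd) * (2/α * (ϑ/2) ^ (2*α-1))))
        = ((Kc * Ky + Kd) * (2/α) / Real.Gamma α) * (ϑ ^ (1-α) * (ϑ/2) ^ (2*α-1)) := by ring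
      _ = ((Kc * Ky + Kd) * (2/α) / Real.Gamma α) * ((2:ℝ) ^ ((1:ℝ) - 2*α) * ϑ ^ α) := by rw [h3]
      _ = C * ϑ ^ α := by rw [hC]; ring
  have hs0 : s 0 = 0 := by rw [hs 0, if_pos rfl]
  have hbound : ∀ ϑ ∈ Set.Icc (0:ℝ) 1, |s ϑ| ≤ C * ϑ ^ α := by
    intro ϑ hϑ
    rcases eq_or_lt_of_le hϑ.1 with h | h
    · rw [← h, hs0, abs_zero, Real.zero_rpow hα0.ne', mul_zero]
    · exact hCs ϑ ⟨h, hϑ.2⟩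
  constructor
  · -- continuity
    intro x hx
    rcases eq_or_lt_of_le hx.1 with h | h
    · -- x = 0
      rw [← h]
      rw [ContinuousWithinAt, hs0]
      have hcw : Tendsto (fun ϑ : ℝ => C * ϑ ^ α) (nhdsWithin 0 (Set.Icc 0 1)) (nhds 0) := by
        have hcw' : ContinuousWithinAt (fun ϑ : ℝ => C * ϑ ^ α) (Set.Icc 0 1) 0 :=
          continuousWithinAt_const.mul
            ((Real.continuousAt_rpow_const 0 α (Or.inr hα0.le)).continuousWithinAt)
        have h00 : C * (0:ℝ) ^ α = 0 := by rw [Real.zero_rpow hα0.ne', mul_zero]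
        rw [ContinuousWithinAt] at hcw'
        rwa [h00] at hcw'
      refine squeeze_zero_norm' ?_ hcw
      filter_upwards [self_mem_nhdsWithin] with ϑ hϑ
      rw [Real.norm_eq_abs]; exact hbound ϑ hϑ
    · -- x > 0
      have hco : ContinuousOn s (Set.Ioc 0 1) := by
        apply ContinuousOn.congr
          ((continuousOn_id.rpow_const fun z _ => Or.inr (by linarith : (0:ℝ) ≤ 1-α)).mul
            (hy_cont.sub hybar_cont))
        intro ζ hζ
        rw [hs ζ, if_neg hζ.1.ne']
        rfl
      refine (hco x ⟨h, hx.2⟩).mono_of_mem_nhdsWithin ?_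
      rw [mem_nhdsWithin]
      exact ⟨Set.Ioi 0, isOpen_Ioi, h, fun z hz => ⟨hz.1, hz.2.2⟩⟩
  · -- the equation
    intro ϑ hϑ
    rcases eq_or_lt_of_le hϑ.1 with h | h
    · rw [← h, hs0, hsbar 0, if_pos rfl, intervalIntegral.integral_same]
      ring
    · have hϑ' : ϑ ∈ Set.Ioc (0:ℝ) 1 := ⟨h, hϑ.2⟩
      obtain ⟨hintEq, -⟩ := main ϑ hϑ'
      rw [hs ϑ, if_neg h.ne', hsbar ϑ, if_neg h.ne', hy_eq ϑ hϑ', hintEq]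
      ring
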